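/- Let D ∈ ℕ and let P₀ be a Borel probability measure on ℝ^D with P₀([−1,1]^D) = 1. Let μ ∈ (0,1) with μ² ≤ 1/2 and σ = √(1 − μ²), and define q(x) = ∫ φ_σ(x − μy) dP₀(y), which is the density of μY + σZ where Y ∼ P₀ and Z ∼ N(0, I_D) are independent. Then the Kullback–Leibler divergence of q from the standard Gaussian density φ₁ on ℝ^D satisfies KL(q, φ₁) = ∫_{ℝ^D} q(x) log( q(x)/φ₁(x) ) dx ≤ (5D/4) μ². -/

import Mathlib

open MeasureTheory
open scoped BigOperators ENNReal NNReal

noncomputable section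

namespace DMpaper

attribute [local instance] Classical.propDecidable

/-- The cube `[-1,1]^D`. -/
def cube (D : ℕ) : Set (Fin D → ℝ) := Set.Icc (-1) 1

/-- Density of the Gaussian `N(0, σ² I_D)` on `ℝ^D`. -/
def gaussD (D : ℕ) (σ : ℝ) (x : Fin D → ℝ) : ℝ :=
  (2 * Real.pi * σ ^ 2) ^ (-(D : ℝ) / 2) * Real.exp (-(∑ i, x i ^ 2) / (2 * σ ^ 2))

/-- `μ_t = exp (-∫_0^t α_s ds)` for the forward process. -/
def muT (α : ℝ → ℝ) (t : ℝ) : ℝ := Real.exp (-∫ s in Set.Ioc (0 : ℝ) t, α s)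

/-- `σ_t = √(1 - μ_t²)` for the forward process. -/
def sigmaT (α : ℝ → ℝ) (t : ℝ) : ℝ := Real.sqrt (1 - muT α t ^ 2)

/-- The marginal density `p_t(x) = ∫_{[-1,1]^D} p₀(y) φ_{σ_t}(x - μ_t y) dy`
of the forward process. -/
def fwdDen (D : ℕ) (α : ℝ → ℝ) (p₀ : (Fin D → ℝ) → ℝ) (t : ℝ) (x : Fin D → ℝ) : ℝ :=
  ∫ y in cube D, p₀ y * gaussD D (sigmaT α t) (x - muT α t • y)

/-- `p₀` is a probability density supported on `[-1,1]^D`, and `α` is Borel measurable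
with values in `[τlo, τhi]` on `[0,∞)`. -/
def ForwardHyp (D : ℕ) (τlo τhi : ℝ) (α : ℝ → ℝ) (p₀ : (Fin D → ℝ) → ℝ) : Prop :=
  Measurable p₀ ∧ (∀ x, 0 ≤ p₀ x) ∧ (∀ x, x ∉ cube D → p₀ x = 0) ∧ (∫ x, p₀ x) = 1 ∧
    Measurable α ∧ ∀ t, 0 ≤ t → τlo ≤ α t ∧ α t ≤ τhi

open Real Filter

/-! ### auxiliary lemmas -/

lemma mul_log_bounds {t : ℝ} (ht : 0 ≤ t) : t - 1 ≤ t * Real.log t ∧ t * Real.log t ≤ t ^ 2 := by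
  rcases eq_or_lt_of_le ht with h | h
  · simp [← h]
  constructor
  · have h1 : Real.log t⁻¹ ≤ t⁻¹ - 1 := Real.log_le_sub_one_of_pos (by positivity)
    rw [Real.log_inv] at h1
    have h2 : t * (1 - t⁻¹) ≤ t * Real.log t := by
      apply mul_le_mul_of_nonneg_left _ ht
      linarith
    have h3 : t * (1 - t⁻¹) = t - 1 := by field_simp
    linarith
  · have h1 : Real.log t ≤ t - 1 := Real.log_le_sub_one_of_pos h
    nlinarith

lemma jensen_mul_log {β : Type*} [MeasurableSpace β] (ν : Measure β) [IsProbabilityMeasure ν]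
    (u : β → ℝ) (hu : AEStronglyMeasurable u ν) (h0 : ∀ y, 0 ≤ u y)
    (M : ℝ) (hM : ∀ y, u y ≤ M) :
    (∫ y, u y ∂ν) * Real.log (∫ y, u y ∂ν) ≤ ∫ y, u y * Real.log (u y) ∂ν := by
  have hne : Nonempty β := by
    by_contra h
    have h2 := measure_univ (μ := ν)
    rw [Set.univ_eq_empty_iff.mpr (not_nonempty_iff.mp h), measure_empty] at h2
    exact zero_ne_one h2
  have hM0 : 0 ≤ M := le_trans (h0 (Classical.arbitrary β)) (hM _)
  have hfi : Integrable u ν := by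
    refine Integrable.mono' (integrable_const M) hu (Filter.Eventually.of_forall fun y => ?_)
    rw [Real.norm_of_nonneg (h0 y)]; exact hM y
  have hgi : Integrable (fun y => u y * Real.log (u y)) ν := by
    refine Integrable.mono' (integrable_const (M^2 + 1))
      (Real.continuous_mul_log.comp_aestronglyMeasurable hu)
      (Filter.Eventually.of_forall fun y => ?_)
    have hb := mul_log_bounds (h0 y)
    rw [Real.norm_eq_abs, abs_le]
    constructor
    · nlinarith [hb.1, h0 y, sq_nonneg M]
    · nlinarith [hb.2, hM y, h0 y]
  exact ConvexOn.map_integral_le (μ := ν) (s := Set.Ici (0:ℝ))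
    (g := fun t => t * Real.log t) (f := u) Real.convexOn_mul_log
    Real.continuous_mul_log.continuousOn isClosed_Ici
    (Filter.Eventually.of_forall fun y => h0 y) hfi hgi

lemma jensen_ratio {β : Type*} [MeasurableSpace β] (ν : Measure β) [IsProbabilityMeasure ν]
    (u : β → ℝ) (hu : AEStronglyMeasurable u ν) (h0 : ∀ y, 0 ≤ u y)
    (M : ℝ) (hM : ∀ y, u y ≤ M) (c : ℝ) (hc : 0 < c) :
    (∫ y, u y ∂ν) * Real.log ((∫ y, u y ∂ν) / c) ≤ ∫ y, u y * Real.log (u y / c) ∂ν := by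
  have key := jensen_mul_log ν (fun y => u y / c)
    ((hu.mul_const c⁻¹).congr (Filter.Eventually.of_forall fun y =>
      (div_eq_mul_inv (u y) c).symm)) (fun y => div_nonneg (h0 y) hc.le)
    (M / c) (fun y => (div_le_div_iff_of_pos_right hc).mpr (hM y))
  have hInt : ∫ y, u y / c ∂ν = (∫ y, u y ∂ν) / c := by
    simp [div_eq_mul_inv, MeasureTheory.integral_mul_const]
  rw [hInt] at key
  have key2 := mul_le_mul_of_nonneg_left key hc.le
  calc (∫ y, u y ∂ν) * Real.log ((∫ y, u y ∂ν) / c)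
      = c * ((∫ y, u y ∂ν) / c * Real.log ((∫ y, u y ∂ν) / c)) := by
        field_simp
    _ ≤ c * ∫ y, u y / c * Real.log (u y / c) ∂ν := key2
    _ = ∫ y, c * (u y / c * Real.log (u y / c)) ∂ν := by
        rw [MeasureTheory.integral_const_mul]
    _ = ∫ y, u y * Real.log (u y / c) ∂ν := by
        congr 1; funext y; field_simp

/-! ### 1-d Gaussian integrals -/

lemma integrable_sq_exp {b : ℝ} (hb : 0 < b) :
    Integrable (fun t : ℝ => t ^ 2 * Real.exp (-b * t ^ 2)) := by
  have key : ∀ t : ℝ, ‖t ^ 2 * Real.exp (-b * t ^ 2)‖ ≤ (2 / (b * Real.exp 1)) * Real.exp (-(b/2) * t ^ 2) := by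
    intro t
    have h1 : (b/2) * t ^ 2 ≤ Real.exp ((b/2) * t ^ 2 - 1) := by
      linarith [Real.add_one_le_exp ((b/2) * t ^ 2 - 1)]
    rw [Real.exp_sub] at h1
    have hbe : 0 < b * Real.exp 1 := by positivity
    have h2 : t ^ 2 ≤ (2 / (b * Real.exp 1)) * Real.exp ((b/2) * t ^ 2) := by
      rw [div_mul_eq_mul_div, le_div_iff₀ hbe]
      have he1 : 0 < Real.exp 1 := Real.exp_pos 1
      rw [le_div_iff₀ he1] at h1
      nlinarith
    have hnn : 0 ≤ t ^ 2 * Real.exp (-b * t ^ 2) := by positivity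
    rw [Real.norm_of_nonneg hnn]
    calc t ^ 2 * Real.exp (-b * t ^ 2)
        ≤ ((2 / (b * Real.exp 1)) * Real.exp ((b/2) * t ^ 2)) * Real.exp (-b * t ^ 2) := by
          gcongr
      _ = (2 / (b * Real.exp 1)) * Real.exp (-(b/2) * t ^ 2) := by
          rw [mul_assoc, ← Real.exp_add]; ring_nf
  refine Integrable.mono' ((integrable_exp_neg_mul_sq (by positivity : (0:ℝ) < b/2)).const_mul _) ?_ (Filter.Eventually.of_forall key)
  exact (Continuous.mul (continuous_pow 2) (Real.continuous_exp.comp (by fun_prop))).aestronglyMeasurable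

lemma integral_sq_exp {b : ℝ} (hb : 0 < b) :
    ∫ t : ℝ, t ^ 2 * Real.exp (-b * t ^ 2) = Real.sqrt (π / b) / (2 * b) := by
  have hderiv : ∀ t : ℝ, HasDerivAt (fun t : ℝ => t * Real.exp (-b * t ^ 2))
      (Real.exp (-b * t ^ 2) - 2 * b * (t ^ 2 * Real.exp (-b * t ^ 2))) t := by
    intro t
    have h1 : HasDerivAt (fun t : ℝ => -b * t ^ 2) (-b * (2 * t)) t := by
      simpa using ((hasDerivAt_pow 2 t).const_mul (-b))
    have := (hasDerivAt_id t).mul h1.exp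
    refine this.congr_deriv ?_
    simp; ring
  have hf' : Integrable (fun t : ℝ => Real.exp (-b * t ^ 2) - 2 * b * (t ^ 2 * Real.exp (-b * t ^ 2))) :=
    (integrable_exp_neg_mul_sq hb).sub ((integrable_sq_exp hb).const_mul _)
  have hf : Integrable (fun t : ℝ => t * Real.exp (-b * t ^ 2)) := integrable_mul_exp_neg_mul_sq hb
  have h0 := MeasureTheory.integral_eq_zero_of_hasDerivAt_of_integrable hderiv hf' hf
  rw [integral_sub (integrable_exp_neg_mul_sq hb) ((integrable_sq_exp hb).const_mul _),
    integral_gaussian, integral_const_mul, sub_eq_zero] at h0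
  field_simp at h0 ⊢
  linarith

lemma integral_lin_exp {b : ℝ} (hb : 0 < b) :
    ∫ t : ℝ, t * Real.exp (-b * t ^ 2) = 0 := by
  have hderiv : ∀ t : ℝ, HasDerivAt (fun t : ℝ => -(2*b)⁻¹ * Real.exp (-b * t ^ 2))
      (t * Real.exp (-b * t ^ 2)) t := by
    intro t
    have h1 : HasDerivAt (fun t : ℝ => -b * t ^ 2) (-b * (2 * t)) t := by
      simpa using ((hasDerivAt_pow 2 t).const_mul (-b))
    have := h1.exp.const_mul (-(2*b)⁻¹)
    refine this.congr_deriv ?_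
    field_simp
  exact MeasureTheory.integral_eq_zero_of_hasDerivAt_of_integrable hderiv
    (integrable_mul_exp_neg_mul_sq hb)
    ((integrable_exp_neg_mul_sq hb).const_mul _)

def g1 (s m t : ℝ) : ℝ :=
  (2 * Real.pi * s ^ 2) ^ (-(1:ℝ)/2) * Real.exp (-(t - m)^2 / (2 * s^2))

section G1
variable {s : ℝ} (hs : 0 < s) (m : ℝ)
include hs

lemma g1_eq : g1 s m = fun t =>
    (2 * Real.pi * s ^ 2) ^ (-(1:ℝ)/2) * Real.exp (-(2*s^2)⁻¹ * (t - m) ^ 2) := by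
  funext t
  have : -(t - m)^2 / (2 * s^2) = -(2*s^2)⁻¹ * (t - m) ^ 2 := by
    field_simp
  rw [g1, this]

lemma binv_pos : (0:ℝ) < (2*s^2)⁻¹ := by positivity

lemma integrable_g1 : Integrable (g1 s m) := by
  rw [g1_eq hs]
  exact (((integrable_exp_neg_mul_sq (binv_pos hs)).comp_sub_right m)).const_mul _

lemma C_mul_sqrt : (2 * Real.pi * s ^ 2) ^ (-(1:ℝ)/2) * Real.sqrt (π / (2*s^2)⁻¹) = 1 := by
  have ha : (0:ℝ) < 2 * Real.pi * s ^ 2 := by positivity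
  have h1 : π / (2*s^2)⁻¹ = 2 * Real.pi * s ^ 2 := by field_simp
  rw [h1, show (-(1:ℝ)/2) = -(1/2 : ℝ) by norm_num, Real.rpow_neg ha.le,
    Real.sqrt_eq_rpow]
  exact inv_mul_cancel₀ (by positivity)

lemma integral_g1 : ∫ t, g1 s m t = 1 := by
  rw [g1_eq hs, MeasureTheory.integral_const_mul]
  have hshift : ∫ t : ℝ, Real.exp (-(2*s^2)⁻¹ * (t - m) ^ 2)
      = ∫ t : ℝ, Real.exp (-(2*s^2)⁻¹ * t ^ 2) :=
    MeasureTheory.integral_sub_right_eq_self (fun u => Real.exp (-(2*s^2)⁻¹ * u ^ 2)) m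
  rw [hshift, integral_gaussian]
  exact C_mul_sqrt hs

lemma integrable_g1_sub_sq : Integrable (fun t => g1 s m t * (t - m)^2) := by
  rw [g1_eq hs]
  have : (fun t => (2 * Real.pi * s ^ 2) ^ (-(1:ℝ)/2) * Real.exp (-(2*s^2)⁻¹ * (t - m) ^ 2) * (t-m)^2)
      = fun t => (2 * Real.pi * s ^ 2) ^ (-(1:ℝ)/2) * (((fun u => u^2 * Real.exp (-(2*s^2)⁻¹ * u ^ 2)) ∘ (fun t => t - m)) t) := by
    funext t; simp [Function.comp]; ring
  rw [this]
  exact ((integrable_sq_exp (binv_pos hs)).comp_sub_right m).const_mul _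

lemma integral_g1_sub_sq : ∫ t, g1 s m t * (t - m)^2 = s ^ 2 := by
  rw [g1_eq hs]
  have h1 : (fun t => (2 * Real.pi * s ^ 2) ^ (-(1:ℝ)/2) * Real.exp (-(2*s^2)⁻¹ * (t - m) ^ 2) * (t-m)^2)
      = fun t => (2 * Real.pi * s ^ 2) ^ (-(1:ℝ)/2) * ((t-m)^2 * Real.exp (-(2*s^2)⁻¹ * (t - m) ^ 2)) := by
    funext t; ring
  have hshift : ∫ t : ℝ, (t-m)^2 * Real.exp (-(2*s^2)⁻¹ * (t - m) ^ 2)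
      = ∫ t : ℝ, t^2 * Real.exp (-(2*s^2)⁻¹ * t ^ 2) :=
    MeasureTheory.integral_sub_right_eq_self (fun u => u^2 * Real.exp (-(2*s^2)⁻¹ * u ^ 2)) m
  rw [h1, MeasureTheory.integral_const_mul, hshift, integral_sq_exp (binv_pos hs)]
  rw [show Real.sqrt (π / (2*s^2)⁻¹) / (2 * (2*s^2)⁻¹) = Real.sqrt (π / (2*s^2)⁻¹) * s^2 by
    field_simp, ← mul_assoc, C_mul_sqrt hs, one_mul]

lemma integrable_g1_lin : Integrable (fun t => g1 s m t * (t - m)) := by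
  rw [g1_eq hs]
  have : (fun t => (2 * Real.pi * s ^ 2) ^ (-(1:ℝ)/2) * Real.exp (-(2*s^2)⁻¹ * (t - m) ^ 2) * (t-m))
      = fun t => (2 * Real.pi * s ^ 2) ^ (-(1:ℝ)/2) * (((fun u => u * Real.exp (-(2*s^2)⁻¹ * u ^ 2)) ∘ (fun t => t - m)) t) := by
    funext t; simp [Function.comp]; ring
  rw [this]
  exact ((integrable_mul_exp_neg_mul_sq (binv_pos hs)).comp_sub_right m).const_mul _

lemma integral_g1_lin : ∫ t, g1 s m t * (t - m) = 0 := by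
  rw [g1_eq hs]
  have h1 : (fun t => (2 * Real.pi * s ^ 2) ^ (-(1:ℝ)/2) * Real.exp (-(2*s^2)⁻¹ * (t - m) ^ 2) * (t-m))
      = fun t => (2 * Real.pi * s ^ 2) ^ (-(1:ℝ)/2) * ((t-m) * Real.exp (-(2*s^2)⁻¹ * (t - m) ^ 2)) := by
    funext t; ring
  have hshift : ∫ t : ℝ, (t-m) * Real.exp (-(2*s^2)⁻¹ * (t - m) ^ 2)
      = ∫ t : ℝ, t * Real.exp (-(2*s^2)⁻¹ * t ^ 2) :=
    MeasureTheory.integral_sub_right_eq_self (fun u => u * Real.exp (-(2*s^2)⁻¹ * u ^ 2)) m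
  rw [h1, MeasureTheory.integral_const_mul, hshift, integral_lin_exp (binv_pos hs), mul_zero]

lemma integrable_g1_sq : Integrable (fun t => g1 s m t * t ^ 2) := by
  have : (fun t => g1 s m t * t ^ 2)
      = fun t => g1 s m t * (t - m)^2 + (2*m) * (g1 s m t * (t - m)) + m^2 * g1 s m t := by
    funext t; ring
  rw [this]
  exact (((integrable_g1_sub_sq hs m).add ((integrable_g1_lin hs m).const_mul _)).add
    ((integrable_g1 hs m).const_mul _))

lemma integral_g1_sq : ∫ t, g1 s m t * t ^ 2 = s ^ 2 + m ^ 2 := by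
  have h1 : (fun t => g1 s m t * t ^ 2)
      = fun t => (g1 s m t * (t - m)^2 + (2*m) * (g1 s m t * (t - m))) + m^2 * g1 s m t := by
    funext t; ring
  have iAB : Integrable (fun t => g1 s m t * (t - m)^2 + (2*m) * (g1 s m t * (t - m))) := by
    exact (integrable_g1_sub_sq hs m).add ((integrable_g1_lin hs m).const_mul (2*m))
  have iC : Integrable (fun t => m^2 * g1 s m t) := by
    exact (integrable_g1 hs m).const_mul (m^2)
  have e1 := MeasureTheory.integral_add iAB iC
  have e2 := MeasureTheory.integral_add (integrable_g1_sub_sq hs m)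
    ((integrable_g1_lin hs m).const_mul (2*m))
  rw [h1, e1, e2, MeasureTheory.integral_const_mul, MeasureTheory.integral_const_mul,
    integral_g1_sub_sq hs m, integral_g1_lin hs m, integral_g1 hs m]
  ring

end G1

/-! ### product lemmas -/

variable {D : ℕ} {s : ℝ}

lemma gaussD_prod (hs : 0 < s) (a x : Fin D → ℝ) :
    gaussD D s (x - a) = ∏ i, g1 s (a i) (x i) := by
  have hb : (0:ℝ) < 2 * Real.pi * s ^ 2 := by positivity
  unfold gaussD g1
  rw [Finset.prod_mul_distrib, Finset.prod_const, Finset.card_univ, Fintype.card_fin]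
  have hC : (2 * Real.pi * s ^ 2) ^ (-(D : ℝ) / 2)
      = ((2 * Real.pi * s ^ 2) ^ (-(1:ℝ)/2)) ^ D := by
    rw [show (-(D : ℝ)/2) = (-(1:ℝ)/2) * (D : ℝ) by ring,
      Real.rpow_mul hb.le, Real.rpow_natCast]
  have hE : Real.exp (-(∑ i, (x - a) i ^ 2) / (2 * s ^ 2))
      = ∏ i, Real.exp (-((x i) - (a i))^2 / (2 * s^2)) := by
    rw [← Real.exp_sum]
    congr 1
    rw [neg_div, Finset.sum_div, ← Finset.sum_neg_distrib]
    exact Finset.sum_congr rfl fun i _ => by simp [neg_div]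
  rw [hC, hE]

lemma integrable_prodgauss (hs : 0 < s) (a : Fin D → ℝ) :
    Integrable (fun x : Fin D → ℝ => ∏ i, g1 s (a i) (x i)) :=
  Integrable.fintype_prod (fun i => integrable_g1 hs (a i))

lemma integral_prodgauss (hs : 0 < s) (a : Fin D → ℝ) :
    ∫ x : Fin D → ℝ, ∏ i, g1 s (a i) (x i) = 1 := by
  rw [MeasureTheory.integral_fintype_prod_volume_eq_prod (fun i => g1 s (a i))]
  simp [integral_g1 hs]

lemma prodgauss_mul_sum_eq (a : Fin D → ℝ) (w : Fin D → ℝ → ℝ) :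
    (fun x : Fin D → ℝ => (∏ i, g1 s (a i) (x i)) * (∑ j, w j (x j)))
      = fun x => ∑ j, ∏ i, (g1 s (a i) (x i) * (if i = j then w j (x i) else 1)) := by
  funext x
  rw [Finset.mul_sum]
  refine Finset.sum_congr rfl fun j _ => ?_
  rw [Finset.prod_mul_distrib]
  congr 1
  simp

lemma integrable_prodgauss_mul_sum (hs : 0 < s) (a : Fin D → ℝ) (w : Fin D → ℝ → ℝ)
    (hint : ∀ j, Integrable (fun t => g1 s (a j) t * w j t)) :
    Integrable (fun x : Fin D → ℝ => (∏ i, g1 s (a i) (x i)) * (∑ j, w j (x j))) := by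
  rw [prodgauss_mul_sum_eq]
  refine MeasureTheory.integrable_finset_sum _ fun j _ => ?_
  refine Integrable.fintype_prod (f := fun i t => g1 s (a i) t * (if i = j then w j t else 1))
    fun i => ?_
  by_cases h : i = j
  · subst h; simpa using hint i
  · simpa [h] using integrable_g1 hs (a i)

lemma integral_prodgauss_mul_sum (hs : 0 < s) (a : Fin D → ℝ) (w : Fin D → ℝ → ℝ)
    (hint : ∀ j, Integrable (fun t => g1 s (a j) t * w j t))
    (vals : Fin D → ℝ) (hv : ∀ j, ∫ t, g1 s (a j) t * w j t = vals j) :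
    ∫ x : Fin D → ℝ, (∏ i, g1 s (a i) (x i)) * (∑ j, w j (x j)) = ∑ j, vals j := by
  rw [prodgauss_mul_sum_eq]
  rw [MeasureTheory.integral_finset_sum _ (fun j _ => by
    refine Integrable.fintype_prod (f := fun i t => g1 s (a i) t * (if i = j then w j t else 1))
      fun i => ?_
    by_cases h : i = j
    · subst h; simpa using hint i
    · simpa [h] using integrable_g1 hs (a i))]
  refine Finset.sum_congr rfl fun j _ => ?_
  rw [MeasureTheory.integral_fintype_prod_volume_eq_prod
    (fun i t => g1 s (a i) t * (if i = j then w j t else 1))]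
  have : ∀ i, (∫ t, g1 s (a i) t * (if i = j then w j t else 1)) = if i = j then vals j else 1 := by
    intro i
    by_cases h : i = j
    · subst h; simp only [if_pos rfl]; exact hv i
    · simp only [if_neg h, mul_one]; exact integral_g1 hs (a i)
  rw [Finset.prod_congr rfl fun i _ => this i]
  simp

/-! ### gaussD basics -/

lemma gaussD_pos (hs : 0 < s) (x : Fin D → ℝ) : 0 < gaussD D s x := by
  unfold gaussD
  exact mul_pos (Real.rpow_pos_of_pos (by positivity) _) (Real.exp_pos _)

lemma gaussD_nonneg (hs : 0 < s) (x : Fin D → ℝ) : 0 ≤ gaussD D s x := (gaussD_pos hs x).le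

lemma gaussD_le (hs : 0 < s) (x : Fin D → ℝ) :
    gaussD D s x ≤ (2 * Real.pi * s ^ 2) ^ (-(D : ℝ) / 2) := by
  unfold gaussD
  have h1 : Real.exp (-(∑ i, x i ^ 2) / (2 * s ^ 2)) ≤ 1 := by
    rw [Real.exp_le_one_iff, neg_div]
    exact neg_nonpos_of_nonneg (div_nonneg (Finset.sum_nonneg fun i _ => sq_nonneg _) (by positivity))
  calc (2 * Real.pi * s ^ 2) ^ (-(D : ℝ) / 2) * Real.exp (-(∑ i, x i ^ 2) / (2 * s ^ 2))
      ≤ (2 * Real.pi * s ^ 2) ^ (-(D : ℝ) / 2) * 1 := by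
        exact mul_le_mul_of_nonneg_left h1 (Real.rpow_pos_of_pos (by positivity) _).le
    _ = (2 * Real.pi * s ^ 2) ^ (-(D : ℝ) / 2) := mul_one _

lemma gaussD_continuous (s : ℝ) : Continuous (gaussD D s) := by
  unfold gaussD
  exact continuous_const.mul (Real.continuous_exp.comp
    (((continuous_finset_sum _ fun i _ => (continuous_apply i).pow 2).neg).div_const _))

lemma log_gaussD_ratio (hs : 0 < s) (z x : Fin D → ℝ) :
    Real.log (gaussD D s z / gaussD D 1 x)
      = (-(D:ℝ)/2) * Real.log (s^2) - (∑ i, z i ^ 2)/(2*s^2) + (∑ i, x i ^ 2)/2 := by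
  have h2π : (0:ℝ) < 2 * Real.pi := by positivity
  have hA : (0:ℝ) < 2 * Real.pi * s ^ 2 := by positivity
  have hA1 : (0:ℝ) < 2 * Real.pi * 1 ^ 2 := by norm_num [Real.pi_pos]
  unfold gaussD
  rw [Real.log_div (by positivity) (by positivity),
    Real.log_mul (ne_of_gt (Real.rpow_pos_of_pos hA _)) (Real.exp_ne_zero _),
    Real.log_mul (ne_of_gt (Real.rpow_pos_of_pos hA1 _)) (Real.exp_ne_zero _),
    Real.log_exp, Real.log_exp, Real.log_rpow hA, Real.log_rpow hA1,
    Real.log_mul (ne_of_gt h2π) (by positivity : (s:ℝ)^2 ≠ 0),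
    show (2:ℝ) * Real.pi * 1 ^ 2 = 2 * Real.pi by ring]
  ring

set_option maxHeartbeats 1000000 in
/-- Kullback–Leibler step in the proof of Theorem 2: the density of
`μY + σZ` with `Y ∼ P₀` supported on `[-1,1]^D`, `Z ∼ N(0, I_D)` and `σ = √(1-μ²)`
satisfies `KL(q, φ₁) ≤ (5D/4) μ²` whenever `μ² ≤ 1/2`. -/
theorem statement_19
    (D : ℕ) (hD : 0 < D) (P₀ : Measure (Fin D → ℝ)) (hP : IsProbabilityMeasure P₀)
    (hsupp : P₀ (cube D) = 1)
    (μ : ℝ) (hμ0 : 0 < μ) (hμ1 : μ < 1) (hμ2 : μ ^ 2 ≤ 1 / 2) :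
    (∫ x, (∫ y, gaussD D (Real.sqrt (1 - μ ^ 2)) (x - μ • y) ∂P₀) *
        Real.log ((∫ y, gaussD D (Real.sqrt (1 - μ ^ 2)) (x - μ • y) ∂P₀) /
          gaussD D 1 x)) ≤
      5 * (D : ℝ) / 4 * μ ^ 2 := by
  have hμ2' : (0:ℝ) < 1 - μ ^ 2 := by nlinarith
  set s : ℝ := Real.sqrt (1 - μ ^ 2) with hsdef
  have hs2 : s ^ 2 = 1 - μ ^ 2 := Real.sq_sqrt hμ2'.le
  have hs0 : 0 < s := Real.sqrt_pos.mpr hμ2'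
  set L : ℝ := (-(D:ℝ)/2) * Real.log (s ^ 2) with hLdef
  have hDs : (D:ℝ) * s ^ 2 = (D:ℝ) - (D:ℝ) * μ ^ 2 := by rw [hs2]; ring
  have hL_le : L ≤ (D:ℝ) * μ ^ 2 := by
    have h1 := Real.log_le_sub_one_of_pos (show (0:ℝ) < (1 - μ^2)⁻¹ by positivity)
    rw [Real.log_inv] at h1
    have h3 : (1 - μ^2)⁻¹ = 1 + μ^2/(1-μ^2) := by field_simp; ring
    have h4 : μ^2/(1-μ^2) ≤ 2*μ^2 := by
      rw [div_le_iff₀ hμ2']; nlinarith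
    have key : -Real.log (1 - μ^2) ≤ 2 * μ^2 := by
      rw [h3] at h1; linarith
    rw [hLdef, hs2]
    have hD0 : (0:ℝ) ≤ (D:ℝ)/2 := by positivity
    nlinarith [mul_le_mul_of_nonneg_left key hD0]
  -- the comparison function F
  set F : (Fin D → ℝ) → (Fin D → ℝ) → ℝ := fun x y =>
    gaussD D s (x - μ • y) * L
      - gaussD D s (x - μ • y) * (∑ i, (x - μ • y) i ^ 2) / (2 * s ^ 2)
      + gaussD D s (x - μ • y) * (∑ i, x i ^ 2) / 2 with hFdef
  -- per-y integral facts
  have key1 : ∀ y : Fin D → ℝ, Integrable (fun x => gaussD D s (x - μ • y))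
      ∧ (∫ x, gaussD D s (x - μ • y)) = 1 := by
    intro y
    have e : (fun x : Fin D → ℝ => gaussD D s (x - μ • y))
        = fun x => ∏ i, g1 s ((μ • y) i) (x i) := funext fun x => gaussD_prod hs0 (μ • y) x
    exact ⟨by rw [e]; exact integrable_prodgauss hs0 _,
      by rw [e]; exact integral_prodgauss hs0 _⟩
  have key2 : ∀ y : Fin D → ℝ,
      Integrable (fun x => gaussD D s (x - μ • y) * (∑ i, (x - μ • y) i ^ 2))
      ∧ (∫ x, gaussD D s (x - μ • y) * (∑ i, (x - μ • y) i ^ 2)) = (D:ℝ) * s ^ 2 := by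
    intro y
    have e : (fun x : Fin D → ℝ => gaussD D s (x - μ • y) * (∑ i, (x - μ • y) i ^ 2))
        = fun x => (∏ i, g1 s ((μ • y) i) (x i))
            * (∑ j, (fun t => (t - (μ • y) j) ^ 2) (x j)) := by
      funext x
      rw [gaussD_prod hs0]
      exact congrArg _ (Finset.sum_congr rfl fun j _ => rfl)
    constructor
    · rw [e]; exact integrable_prodgauss_mul_sum hs0 _ _ (fun j => integrable_g1_sub_sq hs0 _)
    · rw [e, integral_prodgauss_mul_sum hs0 _ _ (fun j => integrable_g1_sub_sq hs0 _)
        (fun _ => s ^ 2) (fun j => integral_g1_sub_sq hs0 _)]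
      simp [Finset.sum_const, Finset.card_univ, mul_comm]
  have key3 : ∀ y : Fin D → ℝ,
      Integrable (fun x => gaussD D s (x - μ • y) * (∑ i, x i ^ 2))
      ∧ (∫ x, gaussD D s (x - μ • y) * (∑ i, x i ^ 2))
          = (D:ℝ) * s ^ 2 + ∑ j, ((μ • y) j) ^ 2 := by
    intro y
    have e : (fun x : Fin D → ℝ => gaussD D s (x - μ • y) * (∑ i, x i ^ 2))
        = fun x => (∏ i, g1 s ((μ • y) i) (x i)) * (∑ j, (fun t => t ^ 2) (x j)) := by
      funext x
      rw [gaussD_prod hs0]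
    constructor
    · rw [e]; exact integrable_prodgauss_mul_sum hs0 _ _ (fun j => integrable_g1_sq hs0 _)
    · rw [e, integral_prodgauss_mul_sum hs0 _ _ (fun j => integrable_g1_sq hs0 _)
        (fun j => s ^ 2 + ((μ • y) j) ^ 2) (fun j => integral_g1_sq hs0 _)]
      rw [Finset.sum_add_distrib, Finset.sum_const, Finset.card_univ, Fintype.card_fin]
      simp [nsmul_eq_mul]
  have hF_int : ∀ y, Integrable (fun x => F x y) := by
    intro y
    simp only [hFdef]
    exact (((key1 y).1.mul_const L).sub ((key2 y).1.div_const _)).add ((key3 y).1.div_const _)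
  have hF_val : ∀ y, (∫ x, F x y)
      = L - (D:ℝ)/2 + ((D:ℝ) * s ^ 2 + ∑ j, ((μ • y) j) ^ 2) / 2 := by
    intro y
    have i1 := (key1 y).1.mul_const L
    have i2 := (key2 y).1.div_const (2 * s ^ 2)
    have i3 := (key3 y).1.div_const 2
    have i12 : Integrable (fun x => gaussD D s (x - μ • y) * L
        - gaussD D s (x - μ • y) * (∑ i, (x - μ • y) i ^ 2) / (2 * s ^ 2)) := by
      exact i1.sub i2
    simp only [hFdef]
    rw [MeasureTheory.integral_add i12 i3, MeasureTheory.integral_sub i1 i2,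
      MeasureTheory.integral_mul_const, MeasureTheory.integral_div, MeasureTheory.integral_div,
      (key1 y).2, (key2 y).2, (key3 y).2]
    field_simp
  have hcube_meas : MeasurableSet (cube D) := measurableSet_Icc
  have hcube_ae : ∀ᵐ y ∂P₀, y ∈ cube D := by
    rw [ae_iff]
    have h0 : {y | ¬ y ∈ cube D} = (cube D)ᶜ := rfl
    rw [h0, measure_compl hcube_meas (measure_ne_top _ _), hsupp, measure_univ]
    simp
  have hsum_le : ∀ y ∈ cube D, (∑ j, ((μ • y) j) ^ 2) ≤ (D:ℝ) * μ ^ 2 := by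
    intro y hy
    have h1 : ∀ j, ((μ • y) j) ^ 2 ≤ μ ^ 2 := by
      intro j
      have h2 : (-1:ℝ) ≤ y j := (Set.mem_Icc.mp hy).1 j
      have h3 : y j ≤ 1 := (Set.mem_Icc.mp hy).2 j
      have h4 : (μ • y) j = μ * y j := rfl
      rw [h4]
      nlinarith [sq_nonneg μ, mul_nonneg (mul_nonneg (sq_nonneg μ) (sub_nonneg.mpr h3))
        (by linarith : (0:ℝ) ≤ y j + 1)]
    calc (∑ j, ((μ • y) j) ^ 2) ≤ ∑ _j : Fin D, μ ^ 2 := Finset.sum_le_sum fun j _ => h1 j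
      _ = (D:ℝ) * μ ^ 2 := by
          rw [Finset.sum_const, Finset.card_univ, Fintype.card_fin, nsmul_eq_mul]
  have hFy_le : ∀ y ∈ cube D, (∫ x, F x y) ≤ (D:ℝ) * μ ^ 2 := by
    intro y hy
    rw [hF_val y]
    linarith [hL_le, hsum_le y hy, hDs]
  have hFnorm_le : ∀ y ∈ cube D, (∫ x, ‖F x y‖) ≤ |L| + (D:ℝ) := by
    intro y hy
    have hGint : Integrable (fun x =>
        gaussD D s (x - μ • y) * |L|
          + gaussD D s (x - μ • y) * (∑ i, (x - μ • y) i ^ 2) / (2 * s ^ 2)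
          + gaussD D s (x - μ • y) * (∑ i, x i ^ 2) / 2) :=
      (((key1 y).1.mul_const _).add ((key2 y).1.div_const _)).add ((key3 y).1.div_const _)
    have hpt : ∀ x, ‖F x y‖ ≤
        gaussD D s (x - μ • y) * |L|
          + gaussD D s (x - μ • y) * (∑ i, (x - μ • y) i ^ 2) / (2 * s ^ 2)
          + gaussD D s (x - μ • y) * (∑ i, x i ^ 2) / 2 := by
      intro x
      simp only [hFdef]
      have ha : 0 ≤ gaussD D s (x - μ • y) := gaussD_nonneg hs0 _
      have hS1 : (0:ℝ) ≤ ∑ i, (x - μ • y) i ^ 2 := Finset.sum_nonneg fun i _ => sq_nonneg _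
      have hS0 : (0:ℝ) ≤ ∑ i, x i ^ 2 := Finset.sum_nonneg fun i _ => sq_nonneg _
      rw [Real.norm_eq_abs]
      have e1 : |gaussD D s (x - μ • y) * L| = gaussD D s (x - μ • y) * |L| := by
        rw [abs_mul, abs_of_nonneg ha]
      have e2 : |gaussD D s (x - μ • y) * (∑ i, (x - μ • y) i ^ 2) / (2 * s ^ 2)|
          = gaussD D s (x - μ • y) * (∑ i, (x - μ • y) i ^ 2) / (2 * s ^ 2) := by
        rw [abs_of_nonneg]; positivity
      have e3 : |gaussD D s (x - μ • y) * (∑ i, x i ^ 2) / 2|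
          = gaussD D s (x - μ • y) * (∑ i, x i ^ 2) / 2 := by
        rw [abs_of_nonneg]; positivity
      calc |gaussD D s (x - μ • y) * L
            - gaussD D s (x - μ • y) * (∑ i, (x - μ • y) i ^ 2) / (2 * s ^ 2)
            + gaussD D s (x - μ • y) * (∑ i, x i ^ 2) / 2|
          ≤ |gaussD D s (x - μ • y) * L
              - gaussD D s (x - μ • y) * (∑ i, (x - μ • y) i ^ 2) / (2 * s ^ 2)|
            + |gaussD D s (x - μ • y) * (∑ i, x i ^ 2) / 2| := abs_add_le _ _
        _ ≤ (|gaussD D s (x - μ • y) * L|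
              + |gaussD D s (x - μ • y) * (∑ i, (x - μ • y) i ^ 2) / (2 * s ^ 2)|)
            + |gaussD D s (x - μ • y) * (∑ i, x i ^ 2) / 2| := by
            have := abs_sub (gaussD D s (x - μ • y) * L)
              (gaussD D s (x - μ • y) * (∑ i, (x - μ • y) i ^ 2) / (2 * s ^ 2))
            linarith
        _ = gaussD D s (x - μ • y) * |L|
              + gaussD D s (x - μ • y) * (∑ i, (x - μ • y) i ^ 2) / (2 * s ^ 2)
              + gaussD D s (x - μ • y) * (∑ i, x i ^ 2) / 2 := by
            rw [e1, e2, e3]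
    have h2 : (∫ x, ‖F x y‖) ≤ ∫ x,
        (gaussD D s (x - μ • y) * |L|
          + gaussD D s (x - μ • y) * (∑ i, (x - μ • y) i ^ 2) / (2 * s ^ 2)
          + gaussD D s (x - μ • y) * (∑ i, x i ^ 2) / 2) :=
      integral_mono (hF_int y).norm hGint hpt
    have i1 := (key1 y).1.mul_const |L|
    have i2 := (key2 y).1.div_const (2 * s ^ 2)
    have i3 := (key3 y).1.div_const 2
    have i12 : Integrable (fun x => gaussD D s (x - μ • y) * |L|
        + gaussD D s (x - μ • y) * (∑ i, (x - μ • y) i ^ 2) / (2 * s ^ 2)) := by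
      exact i1.add i2
    rw [MeasureTheory.integral_add i12 i3, MeasureTheory.integral_add i1 i2,
      MeasureTheory.integral_mul_const, MeasureTheory.integral_div, MeasureTheory.integral_div,
      (key1 y).2, (key2 y).2, (key3 y).2] at h2
    have h5 : (D:ℝ) * s ^ 2 / (2 * s ^ 2) = (D:ℝ)/2 := by
      field_simp
    rw [h5, one_mul] at h2
    linarith [hsum_le y hy, hDs, h2]
  -- joint continuity and product integrability
  have hcont : Continuous (Function.uncurry F) := by
    have c0 : Continuous (fun p : (Fin D → ℝ) × (Fin D → ℝ) => p.1 - μ • p.2) :=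
      continuous_fst.sub (continuous_snd.const_smul μ)
    have cg : Continuous fun p : (Fin D → ℝ) × (Fin D → ℝ) => gaussD D s (p.1 - μ • p.2) :=
      (gaussD_continuous s).comp c0
    have cS1 : Continuous fun p : (Fin D → ℝ) × (Fin D → ℝ) => ∑ i, (p.1 - μ • p.2) i ^ 2 :=
      continuous_finset_sum _ fun i _ => ((continuous_apply i).comp c0).pow 2
    have cS0 : Continuous fun p : (Fin D → ℝ) × (Fin D → ℝ) => ∑ i, p.1 i ^ 2 :=
      continuous_finset_sum _ fun i _ => ((continuous_apply i).comp continuous_fst).pow 2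
    exact ((cg.mul continuous_const).sub ((cg.mul cS1).div_const _)).add
      ((cg.mul cS0).div_const _)
  have hFprod : Integrable (Function.uncurry F) ((volume : Measure (Fin D → ℝ)).prod P₀) := by
    refine (MeasureTheory.integrable_prod_iff' hcont.aestronglyMeasurable).mpr
      ⟨Filter.Eventually.of_forall (fun y => hF_int y), ?_⟩
    refine Integrable.mono' (integrable_const (|L| + (D:ℝ)))
      ((hcont.norm.stronglyMeasurable.integral_prod_left').aestronglyMeasurable) ?_
    filter_upwards [hcube_ae] with y hy
    rw [Real.norm_of_nonneg (integral_nonneg fun x => norm_nonneg _)]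
    exact hFnorm_le y hy
  have hH_int : Integrable (fun x => ∫ y, F x y ∂P₀) := hFprod.integral_prod_left
  -- pointwise Jensen step
  have step1 : ∀ x, (∫ y, gaussD D s (x - μ • y) ∂P₀) *
      Real.log ((∫ y, gaussD D s (x - μ • y) ∂P₀) / gaussD D 1 x) ≤ ∫ y, F x y ∂P₀ := by
    intro x
    have hc : 0 < gaussD D 1 x := gaussD_pos one_pos x
    have hu : AEStronglyMeasurable (fun y => gaussD D s (x - μ • y)) P₀ :=
      ((gaussD_continuous s).comp (continuous_const.sub (continuous_id.const_smul μ))).aestronglyMeasurable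
    have hkey := jensen_ratio P₀ (fun y => gaussD D s (x - μ • y)) hu
      (fun y => gaussD_nonneg hs0 _) ((2 * Real.pi * s ^ 2) ^ (-(D:ℝ)/2))
      (fun y => gaussD_le hs0 _) (gaussD D 1 x) hc
    refine le_trans hkey (le_of_eq (MeasureTheory.integral_congr_ae
      (Filter.Eventually.of_forall fun y => ?_)))
    show gaussD D s (x - μ • y) * Real.log (gaussD D s (x - μ • y) / gaussD D 1 x) = F x y
    rw [log_gaussD_ratio hs0 (x - μ • y) x]
    simp only [hFdef]
    ring
  by_cases hInt : Integrable (fun x => (∫ y, gaussD D s (x - μ • y) ∂P₀) *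
      Real.log ((∫ y, gaussD D s (x - μ • y) ∂P₀) / gaussD D 1 x)) volume
  · calc (∫ x, (∫ y, gaussD D s (x - μ • y) ∂P₀) *
        Real.log ((∫ y, gaussD D s (x - μ • y) ∂P₀) / gaussD D 1 x))
        ≤ ∫ x, ∫ y, F x y ∂P₀ := MeasureTheory.integral_mono hInt hH_int step1
      _ = ∫ y, (∫ x, F x y) ∂P₀ := MeasureTheory.integral_integral_swap hFprod
      _ ≤ ∫ _y, (D:ℝ) * μ ^ 2 ∂P₀ := by
          refine MeasureTheory.integral_mono_ae hFprod.integral_prod_right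
            (MeasureTheory.integrable_const _) ?_
          filter_upwards [hcube_ae] with y hy
          exact hFy_le y hy
      _ = (D:ℝ) * μ ^ 2 := by simp
      _ ≤ 5 * (D:ℝ) / 4 * μ ^ 2 := by
          nlinarith [Nat.cast_nonneg (α := ℝ) D, sq_nonneg μ]
  · rw [MeasureTheory.integral_undef hInt]
    positivity

end DMpaper

end
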